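/- Let τ > 0 and let m > 1 be an integer. For c > 0 set K̃_l(c) = max(0, 1 − (πl/τ)^m·c) for l ≥ 1. Then lim_{c → 0⁺} c^{−1/m} · ∑_{l=1}^∞ (τ/(πl))²·( K̃_l(c)² − 1 ) = −(τ/π)·(2m²)/((2m−1)(m−1)). -/

import Mathlib

open Real Filter

section VRSAux

open MeasureTheory Set

noncomputable def hh (m : ℕ) (x : ℝ) : ℝ := ((max 0 (1 - x^m))^2 - 1) / x^2

lemma hhK_mem {m : ℕ} {u : ℝ} (hu : 0 < u) :
    0 ≤ max 0 (1 - u^m) ∧ max 0 (1 - u^m) ≤ 1 := by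
  have : 0 < u^m := pow_pos hu m
  refine ⟨le_max_left _ _, ?_⟩
  rw [max_le_iff]; constructor <;> nlinarith

lemma hh_abs_le_inv_sq {m : ℕ} {u : ℝ} (hu : 0 < u) : |hh m u| ≤ 1/u^2 := by
  obtain ⟨h0, h1⟩ := hhK_mem (m := m) hu
  have : |(max 0 (1 - u^m))^2 - 1| ≤ 1 := by
    rw [abs_le]; constructor <;> nlinarith
  rw [hh, abs_div, abs_of_nonneg (by positivity : (0:ℝ) ≤ u^2)]
  exact div_le_div_of_nonneg_right this (by positivity) |>.trans_eq rfl

lemma hh_abs_le_two {m : ℕ} (hm : 2 ≤ m) {u : ℝ} (hu : 0 < u) : |hh m u| ≤ 2 := by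
  obtain ⟨h0, h1⟩ := hhK_mem (m := m) hu
  rcases le_or_gt u 1 with h | h
  · have hmax : max 0 (1 - u^m) = 1 - u^m :=
      max_eq_right (by nlinarith [pow_le_one₀ hu.le h (n := m)])
    have hpow : u^m ≤ u^2 := pow_le_pow_of_le_one hu.le h hm
    have h2m : u^m * u^m ≤ u^2 * u^2 := by nlinarith [pow_pos hu m]
    rw [hh, hmax, abs_div, abs_of_nonneg (by positivity : (0:ℝ) ≤ u^2),
      div_le_iff₀ (by positivity)]
    rw [abs_le]
    constructor
    · nlinarith
    · nlinarith
  · calc |hh m u| ≤ 1/u^2 := hh_abs_le_inv_sq hu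
      _ ≤ 2 := by rw [div_le_iff₀ (by positivity)]; nlinarith

lemma hh_continuousAt {m : ℕ} {x : ℝ} (hx : x ≠ 0) : ContinuousAt (hh m) x := by
  apply ContinuousAt.div
  · fun_prop
  · fun_prop
  · exact pow_ne_zero _ hx

lemma hh_measurable (m : ℕ) : Measurable (hh m) := by
  unfold hh; fun_prop

lemma hh_eq_low {m : ℕ} (hm : 2 ≤ m) {x : ℝ} (hx : 0 < x) (hx1 : x ≤ 1) :
    hh m x = x^(2*(m-2)+2) - 2*x^(m-2) := by
  have hmax : max 0 (1 - x^m) = 1 - x^m :=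
    max_eq_right (by nlinarith [pow_le_one₀ hx.le hx1 (n := m)])
  obtain ⟨k, rfl⟩ : ∃ k, m = k + 2 := ⟨m - 2, by omega⟩
  have hx2 : (x:ℝ)^2 ≠ 0 := pow_ne_zero _ hx.ne'
  rw [hh, hmax]
  have : k + 2 - 2 = k := by omega
  rw [this]
  field_simp
  ring

lemma hh_eq_high {m : ℕ} (hm : 1 ≤ m) {x : ℝ} (hx : 1 < x) :
    hh m x = -(x^((-2:ℝ))) := by
  have h1 : 1 < x^m := one_lt_pow₀ hx (by omega)
  have hmax : max 0 (1 - x^m) = 0 := max_eq_left (by linarith)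
  have hx0 : (0:ℝ) < x := by linarith
  rw [hh, hmax, Real.rpow_neg hx0.le, Real.rpow_two]
  field_simp
  norm_num

lemma hh_integrableOn_Ioc (m : ℕ) (hm : 2 ≤ m) : IntegrableOn (hh m) (Ioc 0 1) := by
  have hpoly : IntegrableOn (fun x : ℝ => x^(2*(m-2)+2) - 2*x^(m-2)) (Ioc 0 1) := by
    apply Continuous.integrableOn_Ioc
    fun_prop
  exact hpoly.congr_fun (fun x hx => (hh_eq_low hm hx.1 hx.2).symm) measurableSet_Ioc

lemma hh_integrableOn_Ioi (m : ℕ) (hm : 2 ≤ m) : IntegrableOn (hh m) (Ioi 1) := by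
  have this' : IntegrableOn (fun x : ℝ => -(x^((-2:ℝ)))) (Ioi 1) :=
    (integrableOn_Ioi_rpow_of_lt (by norm_num : (-2:ℝ) < -1) one_pos).neg
  exact this'.congr_fun (fun x hx => (hh_eq_high (by omega) hx).symm) measurableSet_Ioi

lemma hh_integrableOn (m : ℕ) (hm : 2 ≤ m) : IntegrableOn (hh m) (Ioi 0) := by
  have : Ioi (0:ℝ) = Ioc 0 1 ∪ Ioi 1 := (Ioc_union_Ioi_eq_Ioi zero_le_one).symm
  rw [this]
  exact (hh_integrableOn_Ioc m hm).union (hh_integrableOn_Ioi m hm)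

lemma hh_integral (m : ℕ) (hm : 2 ≤ m) :
    ∫ x in Ioi (0:ℝ), hh m x = 1/(2*(m:ℝ)-1) - 2/((m:ℝ)-1) - 1 := by
  obtain ⟨k, rfl⟩ : ∃ k, m = k + 2 := ⟨m - 2, by omega⟩
  have hsplit : Ioi (0:ℝ) = Ioc 0 1 ∪ Ioi 1 := (Ioc_union_Ioi_eq_Ioi zero_le_one).symm
  rw [hsplit, setIntegral_union (by simp [Set.disjoint_left]) measurableSet_Ioi
    (hh_integrableOn_Ioc _ hm) (hh_integrableOn_Ioi _ hm)]
  have hk2 : k + 2 - 2 = k := by omega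
  have h1 : ∫ x in Ioc (0:ℝ) 1, hh (k+2) x
      = ∫ x in Ioc (0:ℝ) 1, (x^(2*k+2) - 2*x^k) := by
    apply setIntegral_congr_fun measurableSet_Ioc
    intro x hx
    rw [hh_eq_low hm hx.1 hx.2, hk2]
  have h2 : ∫ x in Ioi (1:ℝ), hh (k+2) x = ∫ x in Ioi (1:ℝ), -(x^((-2:ℝ))) := by
    apply setIntegral_congr_fun measurableSet_Ioi
    intro x hx
    exact hh_eq_high (by omega) hx
  rw [h1, h2]
  have h3 : ∫ x in Ioc (0:ℝ) 1, (x^(2*k+2) - 2*x^k)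
      = ∫ x in (0:ℝ)..1, (x^(2*k+2) - 2*x^k) := by
    rw [intervalIntegral.integral_of_le zero_le_one]
  have h4 : ∫ x in (0:ℝ)..1, (x^(2*k+2) - 2*x^k)
      = 1/(2*(k:ℝ)+3) - 2/((k:ℝ)+1) := by
    rw [intervalIntegral.integral_sub (by apply intervalIntegral.intervalIntegrable_pow)
      ((intervalIntegral.intervalIntegrable_pow k).const_mul 2)]
    rw [intervalIntegral.integral_const_mul, integral_pow, integral_pow]
    push_cast
    norm_num
    ring
  have h5 : ∫ x in Ioi (1:ℝ), -(x^((-2:ℝ))) = -1 := by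
    rw [integral_neg, integral_Ioi_rpow_of_lt (by norm_num) one_pos]
    norm_num
  rw [h3, h4, h5]
  push_cast
  ring

noncomputable def GG (x : ℝ) : ℝ := if x ≤ 1 then 2 else 1/x^2

lemma GG_integrableOn : IntegrableOn GG (Ioi 0) := by
  have : Ioi (0:ℝ) = Ioc 0 1 ∪ Ioi 1 := (Ioc_union_Ioi_eq_Ioi zero_le_one).symm
  rw [this]
  apply IntegrableOn.union
  · have : IntegrableOn (fun _ : ℝ => (2:ℝ)) (Ioc 0 1) := (integrableOn_const_iff (C := (2:ℝ))).mpr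
      (Or.inr (by rw [Real.volume_Ioc]; exact ENNReal.ofReal_lt_top))
    exact this.congr_fun (fun x hx => by simp [GG, hx.2]) measurableSet_Ioc
  · have h1 : IntegrableOn (fun x : ℝ => x^((-2:ℝ))) (Ioi 1) :=
      integrableOn_Ioi_rpow_of_lt (by norm_num) one_pos
    apply h1.congr_fun _ measurableSet_Ioi
    intro x hx
    have hx1 : (1:ℝ) < x := hx
    simp only [GG, if_neg (not_le.mpr hx1)]
    rw [Real.rpow_neg (by linarith : (0:ℝ) ≤ x), Real.rpow_two]
    exact one_div _ |>.symm

lemma hh_bound {m : ℕ} (hm : 2 ≤ m) {x u : ℝ} (hx : 0 < x) (hxu : x ≤ u) :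
    |hh m u| ≤ GG x := by
  have hu : 0 < u := lt_of_lt_of_le hx hxu
  unfold GG
  rcases le_or_gt x 1 with h | h
  · rw [if_pos h]; exact hh_abs_le_two hm hu
  · rw [if_neg (not_le.mpr h)]
    calc |hh m u| ≤ 1/u^2 := hh_abs_le_inv_sq hu
      _ ≤ 1/x^2 := by
        apply one_div_le_one_div_of_le (by positivity)
        nlinarith

lemma phi_measurable (m : ℕ) (s : ℝ) :
    Measurable (fun x : ℝ => hh m (s * (⌈x/s⌉ : ℤ))) := by
  apply (hh_measurable m).comp
  apply Measurable.const_mul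
  exact (measurable_of_countable _).comp (Int.measurable_ceil.comp (measurable_id.div_const s))

lemma phi_bound {m : ℕ} (hm : 2 ≤ m) {s x : ℝ} (hs : 0 < s) (hx : 0 < x) :
    |hh m (s * (⌈x/s⌉ : ℤ))| ≤ GG x := by
  apply hh_bound hm hx
  have h1 : x/s ≤ (⌈x/s⌉ : ℝ) := Int.le_ceil _
  calc x = (x/s) * s := by field_simp
    _ ≤ (⌈x/s⌉ : ℝ) * s := mul_le_mul_of_nonneg_right h1 hs.le
    _ = s * (⌈x/s⌉ : ℝ) := mul_comm _ _

lemma phi_integrableOn (m : ℕ) (hm : 2 ≤ m) {s : ℝ} (hs : 0 < s) :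
    IntegrableOn (fun x : ℝ => hh m (s * (⌈x/s⌉ : ℤ))) (Ioi 0) := by
  apply Integrable.mono' (GG_integrableOn) ((phi_measurable m s).aestronglyMeasurable)
  rw [ae_restrict_iff' measurableSet_Ioi]
  exact ae_of_all _ (fun x hx => by
    rw [Real.norm_eq_abs]; exact phi_bound hm hs hx)

lemma phi_union {s : ℝ} (hs : 0 < s) :
    Ioi (0:ℝ) = ⋃ l : ℕ, Ioc ((l:ℝ)*s) (((l:ℝ)+1)*s) := by
  ext x
  simp only [mem_Ioi, mem_iUnion, mem_Ioc]
  constructor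
  · intro hx
    have hxs : 0 < x/s := div_pos hx hs
    have hn : 0 < ⌈x/s⌉ := Int.ceil_pos.mpr hxs
    have hz : ((⌈x/s⌉ - 1).toNat : ℤ) = ⌈x/s⌉ - 1 :=
      Int.toNat_of_nonneg (by omega)
    have h1 : (((⌈x/s⌉ - 1).toNat : ℕ) : ℝ) = (⌈x/s⌉ : ℝ) - 1 := by
      exact_mod_cast congrArg (fun z : ℤ => (z:ℝ)) hz
    refine ⟨(⌈x/s⌉ - 1).toNat, ?_, ?_⟩
    · rw [h1]
      have h2 : (⌈x/s⌉ : ℝ) < x/s + 1 := Int.ceil_lt_add_one _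
      have h3 : (⌈x/s⌉ : ℝ) - 1 < x/s := by linarith
      calc ((⌈x/s⌉:ℝ) - 1) * s < (x/s) * s := by nlinarith
        _ = x := by field_simp
    · rw [h1, sub_add_cancel]
      have h2 : x/s ≤ (⌈x/s⌉ : ℝ) := Int.le_ceil _
      calc x = (x/s) * s := by field_simp
        _ ≤ (⌈x/s⌉ : ℝ) * s := mul_le_mul_of_nonneg_right h2 hs.le
  · rintro ⟨l, h1, h2⟩
    have : (0:ℝ) ≤ (l:ℝ)*s := by positivity
    linarith

lemma phi_integral (m : ℕ) (hm : 2 ≤ m) {s : ℝ} (hs : 0 < s) :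
    ∫ x in Ioi (0:ℝ), hh m (s * (⌈x/s⌉ : ℤ)) = ∑' l : ℕ, s * hh m (s*((l:ℝ)+1)) := by
  have hdisj : Pairwise (Function.onFun Disjoint
      (fun l : ℕ => Ioc ((l:ℝ)*s) (((l:ℝ)+1)*s))) := by
    have key : ∀ i j : ℕ, i < j →
        Disjoint (Ioc ((i:ℝ)*s) (((i:ℝ)+1)*s)) (Ioc ((j:ℝ)*s) (((j:ℝ)+1)*s)) := by
      intro i j hij
      apply Set.Ioc_disjoint_Ioc.mpr
      have hij' : ((i:ℝ)+1) ≤ (j:ℝ) := by exact_mod_cast hij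
      calc min (((i:ℝ)+1)*s) (((j:ℝ)+1)*s) ≤ ((i:ℝ)+1)*s := min_le_left _ _
        _ ≤ (j:ℝ)*s := by nlinarith
        _ ≤ max ((i:ℝ)*s) ((j:ℝ)*s) := le_max_right _ _
    intro i j hne
    rcases hne.lt_or_gt with h | h
    · exact key i j h
    · exact (key j i h).symm
  have hint := phi_integrableOn m hm hs
  rw [phi_union hs] at hint ⊢
  rw [integral_iUnion (fun l => measurableSet_Ioc) hdisj hint]
  congr 1
  ext l
  have hconst : ∀ x ∈ Ioc ((l:ℝ)*s) (((l:ℝ)+1)*s),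
      hh m (s * (⌈x/s⌉ : ℤ)) = hh m (s*((l:ℝ)+1)) := by
    intro x hx
    have hceil : ⌈x/s⌉ = (l:ℤ) + 1 := by
      rw [Int.ceil_eq_iff]
      constructor
      · push_cast
        simp only [add_sub_cancel_right]
        rw [lt_div_iff₀ hs]
        exact hx.1
      · push_cast
        rw [div_le_iff₀ hs]
        exact hx.2
    rw [hceil]
    push_cast
    ring_nf
  rw [setIntegral_congr_fun measurableSet_Ioc hconst, setIntegral_const]
  rw [Real.volume_real_Ioc_of_le (by nlinarith : (l:ℝ)*s ≤ ((l:ℝ)+1)*s),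
    smul_eq_mul]
  ring_nf

lemma sum_tendsto (m : ℕ) (hm : 2 ≤ m) :
    Tendsto (fun s : ℝ => ∑' l : ℕ, s * hh m (s*((l:ℝ)+1)))
      (nhdsWithin 0 (Ioi 0)) (nhds (∫ x in Ioi (0:ℝ), hh m x)) := by
  have key : Tendsto (fun s : ℝ => ∫ x in Ioi (0:ℝ), hh m (s * (⌈x/s⌉ : ℤ)))
      (nhdsWithin 0 (Ioi 0)) (nhds (∫ x in Ioi (0:ℝ), hh m x)) := by
    apply tendsto_integral_filter_of_dominated_convergence GG
    · exact Eventually.of_forall (fun s => (phi_measurable m s).aestronglyMeasurable)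
    · filter_upwards [self_mem_nhdsWithin] with s hs
      rw [ae_restrict_iff' measurableSet_Ioi]
      exact ae_of_all _ (fun x hx => by
        rw [Real.norm_eq_abs]; exact phi_bound hm hs hx)
    · exact GG_integrableOn
    · rw [ae_restrict_iff' measurableSet_Ioi]
      apply ae_of_all
      intro x hx
      have hx0 : (0:ℝ) < x := hx
      have harg : Tendsto (fun s : ℝ => s * (⌈x/s⌉ : ℤ)) (nhdsWithin 0 (Ioi 0)) (nhds x) := by
        refine tendsto_of_tendsto_of_tendsto_of_le_of_le' (g := fun _ => x)
          (h := fun s => x + s) tendsto_const_nhds ?_ ?_ ?_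
        · have : Tendsto (fun s : ℝ => x + s) (nhdsWithin 0 (Ioi 0)) (nhds (x + 0)) :=
            (tendsto_const_nhds.add (Filter.tendsto_id)).mono_left nhdsWithin_le_nhds
          simpa using this
        · filter_upwards [self_mem_nhdsWithin] with s hs
          have hs0 : (0:ℝ) < s := hs
          have h1 : x/s ≤ (⌈x/s⌉ : ℝ) := Int.le_ceil _
          calc x = (x/s) * s := by field_simp
            _ ≤ (⌈x/s⌉ : ℝ) * s := mul_le_mul_of_nonneg_right h1 hs0.le
            _ = s * (⌈x/s⌉ : ℝ) := mul_comm _ _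
        · filter_upwards [self_mem_nhdsWithin] with s hs
          have hs0 : (0:ℝ) < s := hs
          have h2 : (⌈x/s⌉ : ℝ) < x/s + 1 := Int.ceil_lt_add_one _
          calc s * (⌈x/s⌉ : ℝ) ≤ s * (x/s + 1) := by nlinarith
            _ = x + s := by field_simp
      exact ((hh_continuousAt hx0.ne').tendsto.comp harg)
  apply key.congr'
  filter_upwards [self_mem_nhdsWithin] with s hs
  exact phi_integral m hm hs

end VRSAux

open MeasureTheory Set in
/-- Riemann-sum asymptotics for the variance-reduction series:
with `K̃_l(c) = max(0, 1 - (πl/τ)^m c)`,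
`c^{-1/m} ∑_{l≥1} (τ/(πl))² (K̃_l(c)² - 1) → -(τ/π)·2m²/((2m-1)(m-1))` as `c → 0⁺`. -/
theorem variance_reduction_series_limit
    (τ : ℝ) (hτ : 0 < τ) (m : ℕ) (hm : 1 < m) :
    Tendsto (fun c : ℝ =>
        c ^ (-(1:ℝ)/(m:ℝ)) *
          ∑' l : ℕ, (τ/(π*(l+1)))^2 * ((max 0 (1 - (π*(l+1)/τ)^m * c))^2 - 1))
      (nhdsWithin 0 (Set.Ioi 0))
      (nhds (-(τ/π) * (2*(m:ℝ)^2) / ((2*(m:ℝ)-1)*((m:ℝ)-1)))) := by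
  have hm2 : 2 ≤ m := hm
  have hπ : (0:ℝ) < π := Real.pi_pos
  have hM : (2:ℝ) ≤ (m:ℝ) := by exact_mod_cast hm2
  have hmR : ((m:ℝ)) ≠ 0 := by positivity
  have hcomp : Tendsto (fun c : ℝ => (π/τ) * c^((1:ℝ)/(m:ℝ)))
      (nhdsWithin 0 (Set.Ioi 0)) (nhdsWithin 0 (Set.Ioi 0)) := by
    rw [tendsto_nhdsWithin_iff]
    constructor
    · have h0 : Tendsto (fun c : ℝ => c^((1:ℝ)/(m:ℝ)))
          (nhdsWithin 0 (Set.Ioi 0)) (nhds 0) := by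
        have hcont : ContinuousAt (fun c : ℝ => c^((1:ℝ)/(m:ℝ))) 0 :=
          Real.continuousAt_rpow_const 0 _ (Or.inr (by positivity))
        have h := hcont.tendsto.mono_left (nhdsWithin_le_nhds (s := Set.Ioi 0))
        rw [Real.zero_rpow (by positivity : (1:ℝ)/(m:ℝ) ≠ 0)] at h
        exact h
      have h := h0.const_mul (π/τ)
      simpa using h
    · filter_upwards [self_mem_nhdsWithin] with c hc
      have hc0 : (0:ℝ) < c := hc
      exact mul_pos (div_pos hπ hτ) (Real.rpow_pos_of_pos hc0 _)
  have hlim := (sum_tendsto m hm2).comp hcomp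
  rw [hh_integral m hm2] at hlim
  have hlim2 := hlim.const_mul (τ/π)
  have hval : (τ/π) * (1/(2*(m:ℝ)-1) - 2/((m:ℝ)-1) - 1)
      = -(τ/π) * (2*(m:ℝ)^2) / ((2*(m:ℝ)-1)*((m:ℝ)-1)) := by
    have h1 : (2*(m:ℝ)-1) ≠ 0 := ne_of_gt (by linarith)
    have h2 : ((m:ℝ)-1) ≠ 0 := ne_of_gt (by linarith)
    field_simp
    ring
  rw [hval] at hlim2
  apply hlim2.congr'
  filter_upwards [self_mem_nhdsWithin] with c hc
  have hc0 : (0:ℝ) < c := hc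
  set t := c^((1:ℝ)/(m:ℝ)) with ht_def
  have ht : 0 < t := Real.rpow_pos_of_pos hc0 _
  have htm : t^m = c := by
    rw [ht_def, ← Real.rpow_natCast (c^((1:ℝ)/(m:ℝ))) m, ← Real.rpow_mul hc0.le,
      one_div_mul_cancel hmR, Real.rpow_one]
  have hneg : c ^ (-(1:ℝ)/(m:ℝ)) = t⁻¹ := by
    rw [neg_div, Real.rpow_neg hc0.le]
  have hterm : ∀ l : ℕ,
      (τ/(π*((l:ℝ)+1)))^2 * ((max 0 (1 - (π*((l:ℝ)+1)/τ)^m * c))^2 - 1)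
      = t^2 * hh m ((π/τ)*t*((l:ℝ)+1)) := by
    intro l
    have hl : (0:ℝ) < (l:ℝ)+1 := by positivity
    have harg : (π/τ)*t*((l:ℝ)+1) = (π*((l:ℝ)+1)/τ)*t := by ring
    have hpow : ((π/τ)*t*((l:ℝ)+1))^m = (π*((l:ℝ)+1)/τ)^m * c := by
      rw [harg, mul_pow, htm]
    rw [hh, hpow, harg]
    field_simp
  show _ = _
  calc (fun c : ℝ => (τ/π) *
        ((fun s : ℝ => ∑' l : ℕ, s * hh m (s*((l:ℝ)+1)))
          ((fun c : ℝ => (π/τ) * c^((1:ℝ)/(m:ℝ))) c))) c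
      = (τ/π) * ∑' l : ℕ, ((π/τ)*t) * hh m (((π/τ)*t)*((l:ℝ)+1)) := rfl
    _ = (τ/π) * (((π/τ)*t) * ∑' l : ℕ, hh m (((π/τ)*t)*((l:ℝ)+1))) := by
        rw [tsum_mul_left]
    _ = t⁻¹ * (t^2 * ∑' l : ℕ, hh m ((π/τ)*t*((l:ℝ)+1))) := by
        field_simp
    _ = t⁻¹ * ∑' l : ℕ, t^2 * hh m ((π/τ)*t*((l:ℝ)+1)) := by rw [tsum_mul_left]
    _ = c ^ (-(1:ℝ)/(m:ℝ)) *
          ∑' l : ℕ, (τ/(π*((l:ℝ)+1)))^2 * ((max 0 (1 - (π*((l:ℝ)+1)/τ)^m * c))^2 - 1) := by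
        rw [hneg, tsum_congr hterm]
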